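/- arXiv:1702.06480 — 2 statements merged into one kernel-verified Lean document; each statement's English description precedes it below -/
import Mathlib

section
/- For every E with −1 < E < 1, setting x_E := arccos(−E) ∈ (0, π), one has (1/(2π))·∫_{−x_E}^{x_E} (E + cos x)^{−1/2} dx ≥ 1/√2. -/
set_option maxHeartbeats 1000000

open Real MeasureTheory intervalIntegral Set Filter

lemma one_div_sqrt_eq_rpow (t : ℝ) : 1 / Real.sqrt t = t ^ (-(1/2) : ℝ) := by
  rcases lt_trichotomy t 0 with ht | ht | ht
  · rw [Real.sqrt_eq_zero_of_nonpos ht.le, Real.rpow_def_of_neg ht]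
    have hc : Real.cos (-(1/2) * π) = 0 := by
      rw [show (-(1/2) : ℝ) * π = -(π/2) by ring, Real.cos_neg, Real.cos_pi_div_two]
    rw [hc]; simp
  · subst ht; rw [Real.sqrt_zero, Real.zero_rpow (by norm_num)]; simp
  · rw [Real.sqrt_eq_rpow, one_div, ← Real.rpow_neg ht.le]

theorem stmt_17 (E : ℝ) (hE1 : -1 < E) (hE2 : E < 1) :
    1 / Real.sqrt 2 ≤
      (1 / (2 * Real.pi)) *
        ∫ x in (-(Real.arccos (-E)))..(Real.arccos (-E)),
          1 / Real.sqrt (E + Real.cos x) := by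
  set a := Real.arccos (-E) with ha_def
  set f : ℝ → ℝ := fun x => 1 / Real.sqrt (E + Real.cos x) with hf_def
  have hf_nonneg : ∀ x, 0 ≤ f x := fun x => div_nonneg zero_le_one (Real.sqrt_nonneg _)
  have ha0 : 0 < a := Real.arccos_pos.2 (by linarith)
  have haπ : a < π := by
    refine lt_of_le_of_ne (Real.arccos_le_pi _) (fun h => ?_)
    have := Real.arccos_eq_pi.1 h; linarith
  have hcosa : Real.cos a = -E := Real.cos_arccos (by linarith) (by linarith)
  set k : ℝ := Real.sqrt ((1+E)/2) with hk_def
  have hk0 : 0 < k := Real.sqrt_pos.2 (by linarith)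
  have hk2 : k ^ 2 = (1+E)/2 := Real.sq_sqrt (by linarith)
  have hkey : ∀ x : ℝ, E + Real.cos x = 2 * (k ^ 2 - Real.sin (x/2) ^ 2) := by
    intro x
    have h1 := Real.cos_two_mul' (x := x/2)
    rw [show 2 * (x/2) = x by ring] at h1
    have h2 := Real.cos_sq' (x := x/2)
    rw [hk2]; nlinarith [h1, h2]
  have hsa : Real.sin (a/2) = k := by
    have h1 : Real.sin (a/2) ^ 2 = k ^ 2 := by
      have h := hkey a; rw [hcosa] at h; nlinarith
    have h2 : 0 ≤ Real.sin (a/2) :=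
      Real.sin_nonneg_of_nonneg_of_le_pi (by linarith) (by linarith)
    nlinarith
  have hpos : ∀ x ∈ Set.Ioo (-a) a, 0 < E + Real.cos x := by
    intro x hx
    have h1 : Real.cos a < Real.cos |x| :=
      Real.cos_lt_cos_of_nonneg_of_le_pi (abs_nonneg x) haπ.le
        (abs_lt.2 ⟨by linarith [hx.1], hx.2⟩)
    rw [Real.cos_abs, hcosa] at h1; linarith
  have hend : ∀ x : ℝ, |x| = a → E + Real.cos x = 0 := by
    intro x hx
    have h : Real.cos x = Real.cos a := by rw [← Real.cos_abs, hx]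
    rw [h, hcosa]; ring
  have hcosa2 : 0 < Real.cos (a/2) :=
    Real.cos_pos_of_mem_Ioo ⟨by linarith [Real.pi_pos], by linarith⟩
  set c : ℝ := (3/4) * k * Real.cos (a/2) with hc_def
  have hc0 : 0 < c := by positivity
  -- lower bound on E + cos x, linear near the endpoints
  have hlow : ∀ x ∈ Set.Icc (-a) a, c * (a - |x|) ≤ E + Real.cos x := by
    intro x hx
    have hy0 : 0 ≤ |x| := abs_nonneg x
    have hya : |x| ≤ a := abs_le.2 ⟨hx.1, hx.2⟩
    have hEc : E + Real.cos x = 2 * (k ^ 2 - Real.sin (|x|/2) ^ 2) := by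
      rw [← Real.cos_abs x]; exact hkey _
    have hssub : Real.sin (a/2) - Real.sin (|x|/2) =
        2 * Real.sin ((a/2 - |x|/2)/2) * Real.cos ((a/2 + |x|/2)/2) := Real.sin_sub_sin _ _
    have hsin_t : (3/4) * ((a - |x|)/4) ≤ Real.sin ((a/2 - |x|/2)/2) := by
      rw [show (a/2 - |x|/2)/2 = (a - |x|)/4 by ring]
      rcases eq_or_lt_of_le (show (0:ℝ) ≤ (a - |x|)/4 by linarith) with h | h
      · rw [← h]; simp
      · have ht1 : (a - |x|)/4 ≤ 1 := by nlinarith [Real.pi_le_four]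
        have := Real.sin_gt_sub_cube h
        nlinarith [sq_nonneg ((a - |x|)/4)]
    have hcos_t : Real.cos (a/2) ≤ Real.cos ((a/2 + |x|/2)/2) :=
      Real.cos_le_cos_of_nonneg_of_le_pi (by positivity) (by linarith) (by linarith)
    have hsint0 : 0 ≤ Real.sin ((a/2 - |x|/2)/2) := le_trans (by linarith) hsin_t
    have hs0 : 0 ≤ Real.sin (|x|/2) :=
      Real.sin_nonneg_of_nonneg_of_le_pi (by linarith) (by linarith)
    have hprod1 : (3/4) * ((a - |x|)/4) * Real.cos (a/2) ≤
        Real.sin ((a/2 - |x|/2)/2) * Real.cos ((a/2 + |x|/2)/2) :=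
      mul_le_mul hsin_t hcos_t hcosa2.le hsint0
    have hdiff : (3/8) * Real.cos (a/2) * (a - |x|) ≤ k - Real.sin (|x|/2) := by
      rw [← hsa]; linarith [hssub, hprod1]
    have hprod2 : (3/8) * Real.cos (a/2) * (a - |x|) * k ≤
        (k - Real.sin (|x|/2)) * (k + Real.sin (|x|/2)) := by
      have hnn : 0 ≤ (3:ℝ)/8 * Real.cos (a/2) * (a - |x|) :=
        mul_nonneg (mul_nonneg (by norm_num) hcosa2.le) (by linarith)
      apply mul_le_mul hdiff (by linarith) hk0.le (by linarith)
    have hre : c * (a - |x|) = 2 * ((3:ℝ)/8 * Real.cos (a/2) * (a - |x|) * k) := by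
      rw [hc_def]; ring
    have hre2 : (k - Real.sin (|x|/2)) * (k + Real.sin (|x|/2)) =
        k ^ 2 - Real.sin (|x|/2) ^ 2 := by ring
    rw [hEc, hre]; linarith [hprod2, hre2]
  -- the comparison function g and its integrability
  set g : ℝ → ℝ := fun x => (1/Real.sqrt c) * (1/Real.sqrt (a - x)) +
      (1/Real.sqrt c) * (1/Real.sqrt (x + a)) with hg_def
  have hbound : ∀ x ∈ Set.Icc (-a) a, f x ≤ g x := by
    intro x hx
    have hya : |x| ≤ a := abs_le.2 ⟨hx.1, hx.2⟩
    have hnn1 : 0 ≤ (1/Real.sqrt c) * (1/Real.sqrt (a - x)) := by positivity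
    have hnn2 : 0 ≤ (1/Real.sqrt c) * (1/Real.sqrt (x + a)) := by positivity
    rcases eq_or_lt_of_le hya with h | h
    · have h0 : E + Real.cos x = 0 := hend x h
      have hf0 : f x = 0 := by
        show (1:ℝ) / Real.sqrt (E + Real.cos x) = 0
        rw [h0, Real.sqrt_zero, div_zero]
      rw [hg_def, hf0]; exact add_nonneg hnn1 hnn2
    · have hca : 0 < c * (a - |x|) := by
        apply mul_pos hc0; linarith
      have h1 : Real.sqrt (c * (a - |x|)) ≤ Real.sqrt (E + Real.cos x) :=
        Real.sqrt_le_sqrt (hlow x hx)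
      have h2 : f x ≤ 1 / Real.sqrt (c * (a - |x|)) :=
        one_div_le_one_div_of_le (Real.sqrt_pos.2 hca) h1
      have h3 : (1:ℝ) / Real.sqrt (c * (a - |x|)) =
          (1/Real.sqrt c) * (1/Real.sqrt (a - |x|)) := by
        rw [Real.sqrt_mul hc0.le, one_div, one_div, one_div, mul_inv]
      have hc' : 0 ≤ 1/Real.sqrt c := by positivity
      have h4 : (1/Real.sqrt c) * (1/Real.sqrt (a - |x|)) ≤ g x := by
        rcases le_or_gt 0 x with hx0 | hx0
        · rw [abs_of_nonneg hx0]; rw [hg_def]; simp only; linarith [hnn2]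
        · rw [abs_of_neg hx0, show a - -x = x + a by ring]; rw [hg_def]; simp only
          linarith [hnn1]
      calc f x ≤ 1 / Real.sqrt (c * (a - |x|)) := h2
        _ = (1/Real.sqrt c) * (1/Real.sqrt (a - |x|)) := h3
        _ ≤ g x := h4
  have hrpow : IntervalIntegrable (fun t : ℝ => t ^ (-(1/2):ℝ)) volume 0 (2*a) :=
    intervalIntegrable_rpow' (by norm_num)
  have h1int : IntervalIntegrable (fun x : ℝ => 1/Real.sqrt (a - x)) volume (-a) a := by
    have h := (hrpow.comp_sub_left a).symm
    rw [show a - 0 = a by ring, show a - 2*a = -a by ring] at h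
    simp only [← one_div_sqrt_eq_rpow] at h
    exact h
  have h2int : IntervalIntegrable (fun x : ℝ => 1/Real.sqrt (x + a)) volume (-a) a := by
    have h := hrpow.comp_add_right a
    rw [show (0:ℝ) - a = -a by ring, show 2*a - a = a by ring] at h
    simp only [← one_div_sqrt_eq_rpow] at h
    exact h
  have hg_int : IntervalIntegrable g volume (-a) a :=
    (h1int.const_mul _).add (h2int.const_mul _)
  have hfm : Measurable f := by
    apply Measurable.div measurable_const
    exact (Real.continuous_sqrt.comp (continuous_const.add Real.continuous_cos)).measurable
  have hf_int : IntervalIntegrable f volume (-a) a := by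
    apply hg_int.mono_fun' hfm.aestronglyMeasurable
    filter_upwards [MeasureTheory.ae_restrict_mem measurableSet_uIoc] with x hx
    have hx' : x ∈ Set.Icc (-a) a := by
      rw [Set.uIoc_of_le (by linarith : -a ≤ a)] at hx
      exact Set.Ioc_subset_Icc_self hx
    show ‖f x‖ ≤ g x
    rw [Real.norm_of_nonneg (hf_nonneg x)]
    exact hbound x hx'
  -- the antiderivative of the lower bound
  set F : ℝ → ℝ := fun x => Real.sqrt 2 * Real.arcsin (Real.sin (x/2) / k) with hF_def
  have hFcont : Continuous F := by
    apply continuous_const.mul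
    exact Real.continuous_arcsin.comp
      ((Real.continuous_sin.comp (continuous_id.div_const 2)).div_const k)
  have hFa : F a = Real.sqrt 2 * (π/2) := by
    show Real.sqrt 2 * Real.arcsin (Real.sin (a/2) / k) = _
    rw [hsa, div_self hk0.ne', Real.arcsin_one]
  have hFna : F (-a) = -(Real.sqrt 2 * (π/2)) := by
    show Real.sqrt 2 * Real.arcsin (Real.sin (-a/2) / k) = _
    rw [show -a/2 = -(a/2) by ring, Real.sin_neg, hsa, neg_div, div_self hk0.ne',
      Real.arcsin_neg, Real.arcsin_one]
    ring
  have hmain : Real.sqrt 2 * π ≤ ∫ x in (-a)..a, f x := by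
    have hlim : Tendsto (fun b => F b - F (-b)) (nhdsWithin a (Set.Iio a))
        (nhds (Real.sqrt 2 * π)) := by
      have h1 : Tendsto (fun b => F b - F (-b)) (nhds a) (nhds (F a - F (-a))) :=
        (hFcont.tendsto a).sub ((hFcont.comp continuous_neg).tendsto a)
      rw [hFa, hFna, show Real.sqrt 2 * (π/2) - -(Real.sqrt 2 * (π/2)) = Real.sqrt 2 * π
        by ring] at h1
      exact h1.mono_left nhdsWithin_le_nhds
    apply le_of_tendsto hlim
    filter_upwards [Ioo_mem_nhdsLT_of_mem (show a ∈ Set.Ioc 0 a from ⟨ha0, le_refl a⟩)]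
      with b hb
    have hb0 : 0 < b := hb.1
    have hba : b < a := hb.2
    have hsub : Set.uIcc (-b) b ⊆ Set.Ioo (-a) a := by
      rw [Set.uIcc_of_le (by linarith)]
      intro x hx
      exact ⟨lt_of_lt_of_le (by linarith) hx.1, lt_of_le_of_lt hx.2 hba⟩
    have hderiv : ∀ x ∈ Set.uIcc (-b) b,
        HasDerivAt F (Real.cos (x/2) / Real.sqrt (E + Real.cos x)) x := by
      intro x hx
      have hxI : x ∈ Set.Ioo (-a) a := hsub hx
      have hpx : 0 < E + Real.cos x := hpos x hxI
      have hs2 : Real.sin (x/2) ^ 2 < k ^ 2 := by have := hkey x; nlinarith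
      have hsk1 : Real.sin (x/2)/k < 1 := by
        rw [div_lt_one hk0]; nlinarith
      have hsk2 : -1 < Real.sin (x/2)/k := by
        rw [lt_div_iff₀ hk0]; nlinarith
      have hd1 : HasDerivAt (fun y : ℝ => Real.sin (y/2) / k)
          (Real.cos (x/2) * (1/2) / k) x := by
        have hid : HasDerivAt (fun y : ℝ => y/2) (1/2) x := (hasDerivAt_id x).div_const 2
        exact ((Real.hasDerivAt_sin (x/2)).comp x hid).div_const k
      have hd2 := (Real.hasDerivAt_arcsin (ne_of_gt hsk2) (ne_of_lt hsk1)).comp x hd1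
      have hd3 := hd2.const_mul (Real.sqrt 2)
      have hu0 : 0 < Real.sqrt (k^2 - Real.sin (x/2)^2) := Real.sqrt_pos.2 (by nlinarith)
      have hksq : Real.sqrt (1 - (Real.sin (x/2)/k)^2) =
          Real.sqrt (k^2 - Real.sin (x/2)^2) / k := by
        rw [show 1 - (Real.sin (x/2)/k)^2 = (k^2 - Real.sin (x/2)^2)/k^2 by
          field_simp]
        rw [Real.sqrt_div (by nlinarith) _, Real.sqrt_sq hk0.le]
      have hE2' : Real.sqrt (E + Real.cos x) =
          Real.sqrt 2 * Real.sqrt (k^2 - Real.sin (x/2)^2) := by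
        rw [hkey x, Real.sqrt_mul (by norm_num : (0:ℝ) ≤ 2)]
      have h2 : Real.sqrt 2 * Real.sqrt 2 = 2 := Real.mul_self_sqrt (by norm_num)
      have hsqrt2 : (0:ℝ) < Real.sqrt 2 := Real.sqrt_pos.2 (by norm_num)
      refine HasDerivAt.congr_deriv hd3 ?_
      symm
      rw [hksq, hE2']
      field_simp
      ring_nf
      rw [Real.sq_sqrt (by norm_num : (0:ℝ) ≤ 2)]
      try ring
    have hF'cont : ContinuousOn (fun x => Real.cos (x/2) / Real.sqrt (E + Real.cos x))
        (Set.uIcc (-b) b) := by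
      apply ContinuousOn.div
      · exact (Real.continuous_cos.comp (continuous_id.div_const 2)).continuousOn
      · exact (Real.continuous_sqrt.comp (continuous_const.add Real.continuous_cos)).continuousOn
      · intro x hx
        exact (Real.sqrt_pos.2 (hpos x (hsub hx))).ne'
    have hF'int : IntervalIntegrable (fun x => Real.cos (x/2) / Real.sqrt (E + Real.cos x))
        volume (-b) b := hF'cont.intervalIntegrable
    have heq : ∫ x in (-b)..b, Real.cos (x/2) / Real.sqrt (E + Real.cos x) = F b - F (-b) :=
      integral_eq_sub_of_hasDerivAt hderiv hF'int
    have hfb_int : IntervalIntegrable f volume (-b) b := by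
      apply hf_int.mono_set
      rw [Set.uIcc_of_le (by linarith : -b ≤ b), Set.uIcc_of_le (by linarith : -a ≤ a)]
      exact Set.Icc_subset_Icc (by linarith) (by linarith)
    have hmono : ∫ x in (-b)..b, Real.cos (x/2) / Real.sqrt (E + Real.cos x) ≤
        ∫ x in (-b)..b, f x := by
      apply integral_mono_on (by linarith : -b ≤ b) hF'int hfb_int
      intro x hx
      have hxmem : x ∈ Set.uIcc (-b) b := by
        rw [Set.uIcc_of_le (by linarith : -b ≤ b)]; exact hx
      have hpx : 0 < Real.sqrt (E + Real.cos x) := Real.sqrt_pos.2 (hpos x (hsub hxmem))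
      show Real.cos (x/2) / Real.sqrt (E + Real.cos x) ≤ 1 / Real.sqrt (E + Real.cos x)
      exact (div_le_div_iff_of_pos_right hpx).2 (Real.cos_le_one _)
    have hsplit : ∫ x in (-b)..b, f x ≤ ∫ x in (-a)..a, f x := by
      have i1 : IntervalIntegrable f volume (-a) (-b) := by
        apply hf_int.mono_set
        rw [Set.uIcc_of_le (by linarith : -a ≤ -b), Set.uIcc_of_le (by linarith : -a ≤ a)]
        exact Set.Icc_subset_Icc (le_refl _) (by linarith)
      have i3 : IntervalIntegrable f volume b a := by
        apply hf_int.mono_set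
        rw [Set.uIcc_of_le (by linarith : b ≤ a), Set.uIcc_of_le (by linarith : -a ≤ a)]
        exact Set.Icc_subset_Icc (by linarith) (le_refl _)
      have i12 : IntervalIntegrable f volume (-a) b := i1.trans hfb_int
      have e1 := integral_add_adjacent_intervals i1 hfb_int
      have e2 := integral_add_adjacent_intervals i12 i3
      have n1 : 0 ≤ ∫ x in (-a)..(-b), f x :=
        integral_nonneg (by linarith) (fun u _ => hf_nonneg u)
      have n3 : 0 ≤ ∫ x in b..a, f x :=
        integral_nonneg (by linarith) (fun u _ => hf_nonneg u)
      linarith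
    linarith [heq, hmono, hsplit]
  have hπ : 0 < π := Real.pi_pos
  have hs2 : Real.sqrt 2 * Real.sqrt 2 = 2 := Real.mul_self_sqrt (by norm_num)
  have hs2pos : 0 < Real.sqrt 2 := Real.sqrt_pos.2 (by norm_num)
  have hid : 1 / Real.sqrt 2 = (1/(2*π)) * (Real.sqrt 2 * π) := by
    field_simp
    nlinarith [hs2]
  rw [hid]
  exact mul_le_mul_of_nonneg_left hmain (by positivity)
end

section
/- Let n ≥ 1 and let Φ : ℝⁿ × ℝⁿ → ℝⁿ × ℝⁿ be a continuously differentiable map of the form Φ(J, ψ) = (Ĵ, I_n(J, ψ_n), ψ̂ + a(J, ψ_n), φ_n(J, ψ_n)), where J = (Ĵ, J_n) ∈ ℝ^{n−1}×ℝ and ψ = (ψ̂, ψ_n) ∈ ℝ^{n−1}×ℝ, for C¹ functions I_n, φ_n : ℝⁿ×ℝ → ℝ and a : ℝⁿ×ℝ → ℝ^{n−1}. Assume that Φ is symplectic, i.e. at every point its Jacobian matrix belongs to the real symplectic group Sp(2n, ℝ) (it preserves the standard symplectic form dJ ∧ dψ). Then at every point one has ∂_{J_n} I_n · ∂_{ψ_n}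 φ_n − ∂_{ψ_n} I_n · ∂_{J_n} φ_n = 1; in other words, for each fixed Ĵ the map (J_n, ψ_n) ↦ (I_n(J, ψ_n), φ_n(J, ψ_n)) is symplectic (area- and orientation-preserving). -/
/-- The standard basis vectors of `ℝⁿ × ℝⁿ`, indexed by `Fin n ⊕ Fin n`. -/
def basisVec {n : ℕ} : (Fin n ⊕ Fin n) → (Fin n → ℝ) × (Fin n → ℝ)
  | Sum.inl i => (Pi.single i 1, 0)
  | Sum.inr i => (0, Pi.single i 1)

/-- The Jacobian matrix of a map `Φ : ℝⁿ × ℝⁿ → ℝⁿ × ℝⁿ` at the point `p`,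
as a `(Fin n ⊕ Fin n) × (Fin n ⊕ Fin n)` real matrix. -/
noncomputable def jacMatrix {n : ℕ}
    (Φ : (Fin n → ℝ) × (Fin n → ℝ) → (Fin n → ℝ) × (Fin n → ℝ))
    (p : (Fin n → ℝ) × (Fin n → ℝ)) :
    Matrix (Fin n ⊕ Fin n) (Fin n ⊕ Fin n) ℝ :=
  Matrix.of fun i j =>
    Sum.elim (fun i' => (fderiv ℝ Φ p (basisVec j)).1 i')
      (fun i' => (fderiv ℝ Φ p (basisVec j)).2 i') i

theorem stmt_19 (m : ℕ)
    (In φn : (Fin (m + 1) → ℝ) × ℝ → ℝ)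
    (a : (Fin (m + 1) → ℝ) × ℝ → Fin m → ℝ)
    (hIn : ContDiff ℝ 1 In) (hφn : ContDiff ℝ 1 φn) (ha : ContDiff ℝ 1 a)
    (Φ : (Fin (m + 1) → ℝ) × (Fin (m + 1) → ℝ) →
      (Fin (m + 1) → ℝ) × (Fin (m + 1) → ℝ))
    (hΦ : ∀ (J ψ : Fin (m + 1) → ℝ),
      Φ (J, ψ) =
        ((fun i : Fin (m + 1) => if h : (i : ℕ) < m then J i else In (J, ψ (Fin.last m))),
         (fun i : Fin (m + 1) => if h : (i : ℕ) < m then ψ i + a (J, ψ (Fin.last m)) ⟨i, h⟩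
            else φn (J, ψ (Fin.last m)))))
    (hsymp : ∀ p, jacMatrix Φ p ∈ Matrix.symplecticGroup (Fin (m + 1)) ℝ) :
    ∀ (J : Fin (m + 1) → ℝ) (t : ℝ),
      fderiv ℝ In (J, t) (Pi.single (Fin.last m) 1, 0) *
          fderiv ℝ φn (J, t) (0, 1) -
        fderiv ℝ In (J, t) (0, 1) *
          fderiv ℝ φn (J, t) (Pi.single (Fin.last m) 1, 0) = 1 := by
  classical
  intro J t
  -- the linear map (J, ψ) ↦ (J, ψ (last))
  set L : ((Fin (m + 1) → ℝ) × (Fin (m + 1) → ℝ)) →L[ℝ] ((Fin (m + 1) → ℝ) × ℝ) :=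
    (ContinuousLinearMap.fst ℝ _ _).prod
      ((ContinuousLinearMap.proj (Fin.last m)).comp (ContinuousLinearMap.snd ℝ _ _)) with hL
  set p : (Fin (m + 1) → ℝ) × (Fin (m + 1) → ℝ) := (J, fun _ => t) with hp
  have hLp : L p = (J, t) := rfl
  set DIn := fderiv ℝ In (J, t) with hDIn
  set Dφ := fderiv ℝ φn (J, t) with hDφ
  set Da := fderiv ℝ a (J, t) with hDa
  set D : ((Fin (m + 1) → ℝ) × (Fin (m + 1) → ℝ)) →L[ℝ]
      ((Fin (m + 1) → ℝ) × (Fin (m + 1) → ℝ)) :=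
    (ContinuousLinearMap.pi fun i : Fin (m + 1) =>
      if h : (i : ℕ) < m then
        (ContinuousLinearMap.proj i).comp (ContinuousLinearMap.fst ℝ _ _)
      else DIn.comp L).prod
    (ContinuousLinearMap.pi fun i : Fin (m + 1) =>
      if h : (i : ℕ) < m then
        (ContinuousLinearMap.proj i).comp (ContinuousLinearMap.snd ℝ _ _)
          + ((ContinuousLinearMap.proj (⟨(i : ℕ), h⟩ : Fin m)).comp Da).comp L
      else Dφ.comp L) with hD
  have hΦeq : Φ = fun x : (Fin (m + 1) → ℝ) × (Fin (m + 1) → ℝ) =>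
      ((fun i : Fin (m + 1) => if h : (i : ℕ) < m then x.1 i else In (L x)),
       (fun i : Fin (m + 1) => if h : (i : ℕ) < m then x.2 i + a (L x) ⟨(i : ℕ), h⟩
          else φn (L x))) := by
    funext x
    obtain ⟨Jx, ψx⟩ := x
    exact hΦ Jx ψx
  have hd : HasFDerivAt Φ D p := by
    rw [hΦeq, hD]
    apply HasFDerivAt.prodMk
    · rw [hasFDerivAt_pi']
      intro i
      by_cases h : (i : ℕ) < m
      · simp only [dif_pos h, ContinuousLinearMap.proj_pi]
        exact (hasFDerivAt_apply (𝕜 := ℝ) i p.1).comp p hasFDerivAt_fst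
      · simp only [dif_neg h, ContinuousLinearMap.proj_pi]
        have h1 : HasFDerivAt In DIn (L p) := by
          rw [hLp, hDIn]
          exact ((hIn.differentiable one_ne_zero) (J, t)).hasFDerivAt
        exact h1.comp p L.hasFDerivAt
    · rw [hasFDerivAt_pi']
      intro i
      by_cases h : (i : ℕ) < m
      · simp only [dif_pos h, ContinuousLinearMap.proj_pi]
        have h1 : HasFDerivAt a Da (L p) := by
          rw [hLp, hDa]
          exact ((ha.differentiable one_ne_zero) (J, t)).hasFDerivAt
        have h2 := (hasFDerivAt_apply (𝕜 := ℝ) (⟨(i : ℕ), h⟩ : Fin m) (a (L p))).comp p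
          (h1.comp p L.hasFDerivAt)
        have h3 := (hasFDerivAt_apply (𝕜 := ℝ) i p.2).comp p hasFDerivAt_snd
        exact h3.add h2
      · simp only [dif_neg h, ContinuousLinearMap.proj_pi]
        have h1 : HasFDerivAt φn Dφ (L p) := by
          rw [hLp, hDφ]
          exact ((hφn.differentiable one_ne_zero) (J, t)).hasFDerivAt
        exact h1.comp p L.hasFDerivAt
  have hfd : fderiv ℝ Φ p = D := hd.fderiv
  -- entries of the Jacobian matrix at p
  have hlast : ¬ ((Fin.last m : Fin (m + 1)) : ℕ) < m := by simp
  have hA : ∀ i : Fin (m + 1),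
      jacMatrix Φ p (Sum.inl i) (Sum.inl (Fin.last m)) =
        if (i : ℕ) < m then 0 else DIn (Pi.single (Fin.last m) 1, 0) := by
    intro i
    simp only [jacMatrix, Matrix.of_apply, Sum.elim_inl, hfd, basisVec, hD,
      ContinuousLinearMap.prod_apply, ContinuousLinearMap.pi_apply]
    by_cases h : (i : ℕ) < m
    · rw [dif_pos h, if_pos h]
      simp only [ContinuousLinearMap.comp_apply, ContinuousLinearMap.coe_fst',
        ContinuousLinearMap.proj_apply]
      exact Pi.single_eq_of_ne (fun hc => h.ne (by rw [hc, Fin.val_last])) 1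
    · rw [dif_neg h, if_neg h]
      rfl
  have hB : ∀ i : Fin (m + 1),
      jacMatrix Φ p (Sum.inl i) (Sum.inr (Fin.last m)) =
        if (i : ℕ) < m then 0 else DIn (0, 1) := by
    intro i
    simp only [jacMatrix, Matrix.of_apply, Sum.elim_inl, hfd, basisVec, hD,
      ContinuousLinearMap.prod_apply, ContinuousLinearMap.pi_apply]
    by_cases h : (i : ℕ) < m
    · rw [dif_pos h, if_pos h]
      rfl
    · rw [dif_neg h, if_neg h]
      have : L ((0 : Fin (m + 1) → ℝ), Pi.single (Fin.last m) (1 : ℝ)) =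
          ((0 : Fin (m + 1) → ℝ), (1 : ℝ)) := by
        simp [hL]
      simp only [ContinuousLinearMap.comp_apply, this]
  have hC : jacMatrix Φ p (Sum.inr (Fin.last m)) (Sum.inl (Fin.last m)) =
      Dφ (Pi.single (Fin.last m) 1, 0) := by
    simp only [jacMatrix, Matrix.of_apply, Sum.elim_inr, hfd, basisVec, hD,
      ContinuousLinearMap.prod_apply, ContinuousLinearMap.pi_apply, dif_neg hlast]
    rfl
  have hE : jacMatrix Φ p (Sum.inr (Fin.last m)) (Sum.inr (Fin.last m)) =
      Dφ (0, 1) := by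
    simp only [jacMatrix, Matrix.of_apply, Sum.elim_inr, hfd, basisVec, hD,
      ContinuousLinearMap.prod_apply, ContinuousLinearMap.pi_apply, dif_neg hlast]
    have : L ((0 : Fin (m + 1) → ℝ), Pi.single (Fin.last m) (1 : ℝ)) =
        ((0 : Fin (m + 1) → ℝ), (1 : ℝ)) := by
      simp [hL]
    simp only [ContinuousLinearMap.comp_apply, this]
  -- the symplectic condition at p
  have hkey := hsymp p
  rw [SymplecticGroup.mem_iff'] at hkey
  have h2 : ((jacMatrix Φ p).transpose * Matrix.J (Fin (m + 1)) ℝ * jacMatrix Φ p)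
        (Sum.inl (Fin.last m)) (Sum.inr (Fin.last m)) =
      Matrix.J (Fin (m + 1)) ℝ (Sum.inl (Fin.last m)) (Sum.inr (Fin.last m)) := by
    rw [hkey]
  rw [Matrix.mul_assoc] at h2
  simp only [Matrix.mul_apply, Fintype.sum_sum_type, Matrix.J, Matrix.fromBlocks_apply₁₁,
    Matrix.fromBlocks_apply₁₂, Matrix.fromBlocks_apply₂₁, Matrix.fromBlocks_apply₂₂,
    Matrix.transpose_apply, Matrix.zero_apply, Matrix.neg_apply, Matrix.one_apply,
    zero_mul, mul_zero, Finset.sum_ite_eq, Finset.sum_ite_eq', Finset.mem_univ,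
    if_true, neg_mul, mul_neg] at h2
  simp only [Finset.sum_const_zero, add_zero, zero_add, ite_mul, one_mul, zero_mul,
    Finset.sum_ite_eq, Finset.mem_univ, if_true, mul_neg, neg_mul, Finset.sum_neg_distrib] at h2
  have hs1 : (∑ x : Fin (m + 1),
      jacMatrix Φ p (Sum.inl x) (Sum.inl (Fin.last m)) *
        jacMatrix Φ p (Sum.inr x) (Sum.inr (Fin.last m))) =
      DIn (Pi.single (Fin.last m) 1, 0) * Dφ (0, 1) := by
    rw [Finset.sum_eq_single (Fin.last m)]
    · rw [hA, if_neg hlast, hE]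
    · intro x _ hx
      rw [hA, if_pos (Fin.val_lt_last hx), zero_mul]
    · intro hmem
      exact absurd (Finset.mem_univ _) hmem
  have hs2 : (∑ x : Fin (m + 1),
      jacMatrix Φ p (Sum.inr x) (Sum.inl (Fin.last m)) *
        jacMatrix Φ p (Sum.inl x) (Sum.inr (Fin.last m))) =
      Dφ (Pi.single (Fin.last m) 1, 0) * DIn (0, 1) := by
    rw [Finset.sum_eq_single (Fin.last m)]
    · rw [hB, if_neg hlast, hC]
    · intro x _ hx
      rw [hB, if_pos (Fin.val_lt_last hx), mul_zero]
    · intro hmem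
      exact absurd (Finset.mem_univ _) hmem
  rw [hs1, hs2] at h2
  linarith
end
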